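/- Let G be a 10-edge graph with degree sequence (5,3,3,3,3,3) in which the degree-5 vertex is adjacent to every other vertex. In any decomposition of K_16 into 12 copies of G, let A be the set of vertices of K_16 that are covered with degree multiset {5,5,5}. Then 3|A| = 12, so |A| = 4; but for any two distinct vertices a, a' ∈ A, the copy of G containing the edge aa' must assign one of a, a' a degree in {3}, contradicting that both a and a' only ever receive degree 5. Hence no such decomposition exists. -/

import Mathlib

open SimpleGraph

/-- `f` is a decomposition of `H` into `m` edge-disjoint copies of `G`. -/
def IsDecompFun {V W : Type*} (H : SimpleGraph V) (G : SimpleGraph W)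
    {m : ℕ} (f : Fin m → H.Subgraph) : Prop :=
  (∀ i, Nonempty ((f i).coe ≃g G)) ∧
  ∀ e ∈ H.edgeSet, ∃! i, e ∈ SimpleGraph.Subgraph.edgeSet (f i)

/-- Let `G` be a 10-edge graph with degree sequence `(5,3,3,3,3,3)` in which the
degree-5 vertex is adjacent to every other vertex.  Then there is no decomposition
of `K_16` into 12 copies of `G`. -/
theorem stmt_18 (G : SimpleGraph (Fin 6)) [DecidableRel G.Adj]
    (hedges : G.edgeFinset.card = 10)
    (hdeg : (Finset.univ.val.map (fun x => G.degree x) : Multiset ℕ) = {5, 3, 3, 3, 3, 3})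
    (hadj : ∀ x : Fin 6, G.degree x = 5 → ∀ y : Fin 6, y ≠ x → G.Adj x y) :
    ¬ ∃ f : Fin 12 → (⊤ : SimpleGraph (Fin 16)).Subgraph,
        IsDecompFun (⊤ : SimpleGraph (Fin 16)) G f := by
  classical
  rintro ⟨f, hiso, hcover⟩
  set φ : ∀ i, ((f i).coe ≃g G) := fun i => (hiso i).some with hφ
  -- every degree of G is 3 or 5
  have hGmem : ∀ x : Fin 6, G.degree x = 3 ∨ G.degree x = 5 := by
    intro x
    have hx : G.degree x ∈ ({5, 3, 3, 3, 3, 3} : Multiset ℕ) := by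
      rw [← hdeg]
      exact Multiset.mem_map_of_mem _ (Finset.mem_val.mpr (Finset.mem_univ x))
    simp at hx
    tauto
  -- G has a unique vertex of degree 5
  have hG5 : ∃! x : Fin 6, G.degree x = 5 := by
    have h1 : (Multiset.filter (fun x => 5 = G.degree x) Finset.univ.val).card = 1 := by
      have h := Multiset.count_map (fun x => G.degree x) (Finset.univ.val) (b := 5)
      rw [hdeg] at h
      rw [← h]
      decide
    obtain ⟨x₀, hx₀⟩ := Multiset.card_eq_one.mp h1
    refine ⟨x₀, ?_, ?_⟩
    · have hm : x₀ ∈ Multiset.filter (fun x => 5 = G.degree x) Finset.univ.val := by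
        rw [hx₀]; simp
      exact ((Multiset.mem_filter.mp hm).2).symm
    · intro y hy
      have hm : y ∈ Multiset.filter (fun x => 5 = G.degree x) Finset.univ.val :=
        Multiset.mem_filter.mpr ⟨Finset.mem_val.mpr (Finset.mem_univ y), hy.symm⟩
      rw [hx₀] at hm
      simpa using hm
  -- degree of v in copy i
  set D : Fin 12 → Fin 16 → ℕ :=
    fun i v => (Finset.univ.filter fun w => (f i).Adj v w).card with hD
  have mem_of_ne : ∀ (i : Fin 12) (v : Fin 16), D i v ≠ 0 → v ∈ (f i).verts := by
    intro i v h0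
    have hpos : 0 < (Finset.univ.filter fun w => (f i).Adj v w).card :=
      Nat.pos_of_ne_zero h0
    obtain ⟨w, hw⟩ := Finset.card_pos.mp hpos
    exact ((Finset.mem_filter.mp hw).2).fst_mem
  -- D agrees with G's degree via the isomorphism
  have key : ∀ (i : Fin 12) (v : Fin 16) (hv : v ∈ (f i).verts),
      D i v = G.degree ((φ i) ⟨v, hv⟩) := by
    intro i v hv
    rw [hD, ← SimpleGraph.card_neighborFinset_eq_degree]
    apply Finset.card_bij
      (fun w hw => (φ i) ⟨w, ((Finset.mem_filter.mp hw).2).snd_mem⟩)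
    · intro w hw
      rw [SimpleGraph.mem_neighborFinset]
      have hadj' : (f i).coe.Adj ⟨v, hv⟩ ⟨w, ((Finset.mem_filter.mp hw).2).snd_mem⟩ :=
        (Finset.mem_filter.mp hw).2
      exact (φ i).map_rel_iff.mpr hadj'
    · intro w₁ hw₁ w₂ hw₂ h
      exact congrArg Subtype.val ((φ i).injective h)
    · intro u hu
      refine ⟨((φ i).symm u).val, ?_, ?_⟩
      · have hG : G.Adj ((φ i) ⟨v, hv⟩) ((φ i) ((φ i).symm u)) := by
          rw [RelIso.apply_symm_apply]
          exact (SimpleGraph.mem_neighborFinset _ _ _).mp hu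
        have hc : (f i).coe.Adj ⟨v, hv⟩ ((φ i).symm u) := (φ i).map_rel_iff.mp hG
        exact Finset.mem_filter.mpr ⟨Finset.mem_univ _, hc⟩
      · exact (φ i).apply_symm_apply u
  -- possible values of D
  have hval : ∀ i v, D i v = 0 ∨ D i v = 3 ∨ D i v = 5 := by
    intro i v
    by_cases h0 : D i v = 0
    · exact Or.inl h0
    · right
      have hv := mem_of_ne i v h0
      rw [key i v hv]
      exact hGmem _
  -- each copy has a unique vertex of degree 5
  have huniq5 : ∀ i : Fin 12, ∃! v : Fin 16, D i v = 5 := by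
    intro i
    obtain ⟨x₀, hx₀, hx₀u⟩ := hG5
    refine ⟨((φ i).symm x₀).val, ?_, ?_⟩
    · show D i ((φ i).symm x₀).val = 5
      rw [key i _ ((φ i).symm x₀).2]
      have he : (⟨((φ i).symm x₀).val, ((φ i).symm x₀).2⟩ : (f i).verts) = (φ i).symm x₀ := rfl
      rw [he, RelIso.apply_symm_apply]
      exact hx₀
    · intro y hy
      have h0 : D i y ≠ 0 := by
        show D i y ≠ 0
        intro h; rw [h] at hy; exact absurd hy (by norm_num)
      have hv := mem_of_ne i y h0
      have hy' : D i y = 5 := hy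
      rw [key i y hv] at hy'
      have h1 := hx₀u _ hy'
      have h2 : (⟨y, hv⟩ : (f i).verts) = (φ i).symm x₀ := by
        apply (φ i).injective
        rw [h1, RelIso.apply_symm_apply]
      exact congrArg Subtype.val h2
  -- each vertex has total degree 15 over all copies
  have hsum15 : ∀ v : Fin 16, ∑ i : Fin 12, D i v = 15 := by
    intro v
    have h1 : ∑ i : Fin 12, D i v
        = ∑ i : Fin 12, ∑ w : Fin 16, (if (f i).Adj v w then 1 else 0) := by
      apply Finset.sum_congr rfl
      intro i _
      exact Finset.card_filter _ _
    rw [h1, Finset.sum_comm]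
    have h2 : ∀ w : Fin 16,
        (∑ i : Fin 12, if (f i).Adj v w then 1 else 0) = if v = w then 0 else 1 := by
      intro w
      by_cases hvw : v = w
      · subst hvw
        rw [if_pos rfl]
        apply Finset.sum_eq_zero
        intro i _
        rw [if_neg]
        exact fun h => ((f i).adj_sub h).ne rfl
      · rw [if_neg hvw]
        have hedge : s(v, w) ∈ (⊤ : SimpleGraph (Fin 16)).edgeSet := by
          simp [hvw]
        obtain ⟨i, hi, hiu⟩ := hcover _ hedge
        rw [Finset.sum_eq_single i]
        · rw [if_pos (SimpleGraph.Subgraph.mem_edgeSet.mp hi)]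
        · intro j _ hj
          rw [if_neg]
          intro hadj'
          exact hj (hiu j (SimpleGraph.Subgraph.mem_edgeSet.mpr hadj'))
        · intro h; exact absurd (Finset.mem_univ i) h
    rw [Finset.sum_congr rfl (fun w _ => h2 w)]
    have hA : (∑ w : Fin 16, if v = w then (1:ℕ) else 0) = 1 := by
      rw [Finset.sum_ite_eq]; simp
    have hB : ∀ w : Fin 16, ((if v = w then (0:ℕ) else 1) + if v = w then 1 else 0) = 1 := by
      intro w; by_cases h : v = w <;> simp [h]
    have hC : (∑ w : Fin 16, if v = w then (0:ℕ) else 1)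
        + (∑ w : Fin 16, if v = w then (1:ℕ) else 0) = 16 := by
      rw [← Finset.sum_add_distrib, Finset.sum_congr rfl (fun w _ => hB w)]
      simp
    omega
  -- the number of (copy, vertex) incidences with degree 5 is 12
  have htotal : ∑ v : Fin 16, (Finset.univ.filter fun i => D i v = 5).card = 12 := by
    have h1 : ∀ i : Fin 12, (Finset.univ.filter fun v => D i v = 5).card = 1 := by
      intro i
      obtain ⟨v₀, hv₀, hu⟩ := huniq5 i
      rw [Finset.card_eq_one]
      exact ⟨v₀, Finset.eq_singleton_iff_unique_mem.mpr
        ⟨Finset.mem_filter.mpr ⟨Finset.mem_univ _, hv₀⟩,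
         fun y hy => hu y (Finset.mem_filter.mp hy).2⟩⟩
    have h2 : ∑ v : Fin 16, (Finset.univ.filter fun i => D i v = 5).card
        = ∑ i : Fin 12, (Finset.univ.filter fun v => D i v = 5).card := by
      simp_rw [Finset.card_filter]
      exact Finset.sum_comm
    rw [h2, Finset.sum_congr rfl (fun i _ => h1 i)]
    simp
  -- per-vertex degree分布
  have hsplit : ∀ v : Fin 16,
      ((Finset.univ.filter fun i => D i v = 5).card = 3
        ∧ (Finset.univ.filter fun i => D i v = 3).card = 0)
      ∨ (Finset.univ.filter fun i => D i v = 5).card = 0 := by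
    intro v
    have h15 := hsum15 v
    have hsplit1 : ∑ i : Fin 12, D i v
        = ∑ i ∈ Finset.univ.filter (fun i => D i v = 5), D i v
          + ∑ i ∈ Finset.univ.filter (fun i => ¬ D i v = 5), D i v :=
      (Finset.sum_filter_add_sum_filter_not _ _ _).symm
    have hsplit2 : ∑ i ∈ Finset.univ.filter (fun i => ¬ D i v = 5), D i v
        = ∑ i ∈ (Finset.univ.filter (fun i => ¬ D i v = 5)).filter (fun i => D i v = 3), D i v
          + ∑ i ∈ (Finset.univ.filter (fun i => ¬ D i v = 5)).filter (fun i => ¬ D i v = 3), D i v :=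
      (Finset.sum_filter_add_sum_filter_not _ _ _).symm
    have e5 : ∑ i ∈ Finset.univ.filter (fun i => D i v = 5), D i v
        = (Finset.univ.filter fun i => D i v = 5).card * 5 := by
      rw [Finset.sum_congr rfl (fun i hi => (Finset.mem_filter.mp hi).2)]
      simp [Finset.sum_const, Nat.smul_one_eq_cast]
    have e3 : ∑ i ∈ (Finset.univ.filter (fun i => ¬ D i v = 5)).filter (fun i => D i v = 3), D i v
        = (Finset.univ.filter fun i => D i v = 3).card * 3 := by
      rw [Finset.sum_congr rfl (fun i hi => (Finset.mem_filter.mp hi).2)]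
      rw [Finset.sum_const, Finset.filter_filter]
      have : Finset.univ.filter (fun i => ¬ D i v = 5 ∧ D i v = 3)
          = Finset.univ.filter (fun i => D i v = 3) := by
        apply Finset.filter_congr
        intro i _
        constructor
        · exact fun h => h.2
        · intro h; exact ⟨by omega, h⟩
      rw [this]; simp [Nat.smul_one_eq_cast, Nat.mul_comm]
    have e0 : ∑ i ∈ (Finset.univ.filter (fun i => ¬ D i v = 5)).filter (fun i => ¬ D i v = 3), D i v
        = 0 := by
      apply Finset.sum_eq_zero
      intro i hi
      have h1 := (Finset.mem_filter.mp hi).2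
      have h2 := (Finset.mem_filter.mp (Finset.mem_filter.mp hi).1).2
      rcases hval i v with h | h | h
      · exact h
      · exact absurd h h1
      · exact absurd h h2
    rw [hsplit1, hsplit2, e5, e3, e0] at h15
    omega
  -- A := vertices always of degree 5
  set A : Finset (Fin 16) :=
    Finset.univ.filter (fun v => (Finset.univ.filter fun i => D i v = 5).card = 3) with hA
  have hcardA : 3 * A.card = 12 := by
    have h1 : ∑ v : Fin 16, (Finset.univ.filter fun i => D i v = 5).card
        = ∑ v ∈ A, (Finset.univ.filter fun i => D i v = 5).card
          + ∑ v ∈ Finset.univ.filter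
              (fun v => ¬ (Finset.univ.filter fun i => D i v = 5).card = 3),
              (Finset.univ.filter fun i => D i v = 5).card :=
      (Finset.sum_filter_add_sum_filter_not _ _ _).symm
    have h2 : ∑ v ∈ A, (Finset.univ.filter fun i => D i v = 5).card = A.card * 3 := by
      rw [Finset.sum_congr rfl (fun v hv => (Finset.mem_filter.mp hv).2)]
      simp [Nat.mul_comm]
      rfl
    have h3 : ∑ v ∈ Finset.univ.filter
        (fun v => ¬ (Finset.univ.filter fun i => D i v = 5).card = 3),
        (Finset.univ.filter fun i => D i v = 5).card = 0 := by
      apply Finset.sum_eq_zero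
      intro v hv
      have hne := (Finset.mem_filter.mp hv).2
      rcases hsplit v with ⟨h5, _⟩ | h0
      · exact absurd h5 hne
      · exact h0
    rw [h1, h2, h3] at htotal
    omega
  -- get two distinct vertices of A
  have h2A : 1 < A.card := by omega
  obtain ⟨a, ha, a', ha', hne⟩ := Finset.one_lt_card.mp h2A
  -- the copy containing the edge a a'
  have hedge : s(a, a') ∈ (⊤ : SimpleGraph (Fin 16)).edgeSet := by simp [hne]
  obtain ⟨i, hi, -⟩ := hcover _ hedge
  have hiadj : (f i).Adj a a' := SimpleGraph.Subgraph.mem_edgeSet.mp hi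
  have hD5 : ∀ b : Fin 16, b ∈ A → (f i).Adj b a ∨ (f i).Adj b a' → D i b = 5 := by
    intro b hb hbadj
    have hb3 := (Finset.mem_filter.mp hb).2
    have h0 : D i b ≠ 0 := by
      have hpos : 0 < D i b := by
        show 0 < (Finset.univ.filter fun w => (f i).Adj b w).card
        apply Finset.card_pos.mpr
        rcases hbadj with hb1 | hb1
        · exact ⟨a, Finset.mem_filter.mpr ⟨Finset.mem_univ _, hb1⟩⟩
        · exact ⟨a', Finset.mem_filter.mpr ⟨Finset.mem_univ _, hb1⟩⟩
      omega
    have h3 : D i b ≠ 3 := by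
      intro h
      have hb0 : (Finset.univ.filter fun j => D j b = 3).card = 0 := by
        rcases hsplit b with ⟨_, hz⟩ | hz
        · exact hz
        · omega
      have : i ∈ Finset.univ.filter fun j => D j b = 3 :=
        Finset.mem_filter.mpr ⟨Finset.mem_univ _, h⟩
      rw [Finset.card_eq_zero.mp hb0] at this
      exact absurd this (Finset.notMem_empty i)
    rcases hval i b with h | h | h
    · exact absurd h h0
    · exact absurd h h3
    · exact h
  have hDa : D i a = 5 := hD5 a ha (Or.inr hiadj)
  have hDa' : D i a' = 5 := hD5 a' ha' (Or.inl hiadj.symm)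
  obtain ⟨v₀, -, hu⟩ := huniq5 i
  exact hne ((hu a hDa).trans (hu a' hDa').symm)
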